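/- Fix d ≥ 1, a nonzero vector μ ∈ ℝ^d, σ > 0, p ∈ (1/2, 1), and t > 2; set q = 1 − 1/t. Let D_p be the distribution on ℝ^d × {−1,+1} where Y is uniform on {−1,+1}, X given Y=+1 is N(μ, σ²I), and X given Y=−1 is the mixture p·N(−μ, σ²I) + (1−p)·N(3μ, σ²I). Let h^LDA_q be the classifier that outputs +1 iff ‖x − μ‖ ≤ ‖x + (4q−3)μ‖ (the ideal LDA classifier built with mixture weight q instead of p). Then, with ν = ‖μ‖/σ, 2·Pr_{(X,Y)∼D_p}[h^LDA_q(X) ≠ Y] = Φ(−(1 − 2/t)ν) + p·Φ(−(1 + 2/t)ν) + (1−p)·Φ((3 − 2/t)ν). -/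

import Mathlib

open MeasureTheory Real Set ProbabilityTheory
open scoped ENNReal RealInnerProductSpace
open scoped NNReal

/-- The standard normal cumulative distribution function
`Φ(z) = ∫_{−∞}^z (1/√(2π)) e^{−u²/2} du`. -/
noncomputable def stdNormCDF (z : ℝ) : ℝ :=
  ∫ u in Set.Iic z, (1 / Real.sqrt (2 * Real.pi)) * Real.exp (-u ^ 2 / 2)

lemma stdNormCDF_nonneg (z : ℝ) : 0 ≤ stdNormCDF z :=
  setIntegral_nonneg measurableSet_Iic fun u _ => by positivity

lemma vσ_ne {σ : ℝ} (hσ : 0 < σ) : (⟨σ^2, sq_nonneg σ⟩ : ℝ≥0) ≠ 0 := by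
  intro h
  have := congrArg NNReal.toReal h
  change σ^2 = 0 at this
  nlinarith

lemma int_g1_Iic (a c : ℝ) {σ : ℝ} (hσ : 0 < σ) :
    ∫ x in Iic c, gaussianPDFReal a ⟨σ^2, sq_nonneg σ⟩ x = stdNormCDF ((c - a)/σ) := by
  set v : ℝ≥0 := ⟨σ^2, sq_nonneg σ⟩ with hv
  have hvne : v ≠ 0 := vσ_ne hσ
  have hmap : (gaussianReal 0 1).map (fun x => σ * x + a) = gaussianReal a v := by
    have h1 : (fun x : ℝ => σ * x + a) = (fun x => x + a) ∘ (fun x => σ * x) := rfl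
    rw [h1, ← Measure.map_map (measurable_add_const a) (measurable_const_mul σ),
      gaussianReal_map_const_mul σ, gaussianReal_map_add_const a]
    congr 1
    · ring
    · ext
      simp [hv]
      rfl
  have hpre : (fun x : ℝ => σ * x + a) ⁻¹' Iic c = Iic ((c - a)/σ) := by
    ext x
    simp only [Set.mem_preimage, Set.mem_Iic]
    rw [le_div_iff₀ hσ]
    constructor <;> intro h <;> nlinarith [mul_comm σ x]
  have h2 : gaussianReal a v (Iic c) = gaussianReal 0 1 (Iic ((c - a)/σ)) := by
    rw [← hmap, Measure.map_apply ((measurable_const_mul σ).add_const a) measurableSet_Iic, hpre]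
  rw [gaussianReal_apply_eq_integral _ hvne, gaussianReal_apply_eq_integral _ one_ne_zero] at h2
  have h3 := (ENNReal.ofReal_eq_ofReal_iff
    (setIntegral_nonneg measurableSet_Iic fun u _ => gaussianPDFReal_nonneg _ _ _)
    (setIntegral_nonneg measurableSet_Iic fun u _ => gaussianPDFReal_nonneg _ _ _)).mp h2
  rw [h3]
  unfold stdNormCDF
  refine setIntegral_congr_fun measurableSet_Iic fun u _ => ?_
  unfold gaussianPDFReal
  norm_num

lemma int_g1_Iio (a c : ℝ) {σ : ℝ} (hσ : 0 < σ) :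
    ∫ x in Iio c, gaussianPDFReal a ⟨σ^2, sq_nonneg σ⟩ x = stdNormCDF ((c - a)/σ) := by
  rw [setIntegral_congr_set (Iio_ae_eq_Iic), int_g1_Iic a c hσ]

/-- Density of the `d`-dimensional Gaussian `N(m, σ²I)`:
`f(x; m, σ²I) = (2πσ²)^{−d/2} exp(−‖x−m‖²/(2σ²))`. -/
noncomputable def gaussPdf (d : ℕ) (m : EuclideanSpace ℝ (Fin d)) (σ : ℝ)
    (x : EuclideanSpace ℝ (Fin d)) : ℝ :=
  (2 * Real.pi * σ ^ 2) ^ (-(d : ℝ) / 2) * Real.exp (-‖x - m‖ ^ 2 / (2 * σ ^ 2))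


lemma gaussPdf_nonneg (d : ℕ) (m : EuclideanSpace ℝ (Fin d)) {σ : ℝ} (hσ : 0 < σ)
    (x : EuclideanSpace ℝ (Fin d)) : 0 ≤ gaussPdf d m σ x := by
  unfold gaussPdf; positivity

lemma gaussPdf_pi (d : ℕ) (m : EuclideanSpace ℝ (Fin d)) {σ : ℝ} (hσ : 0 < σ)
    (x : EuclideanSpace ℝ (Fin d)) :
    gaussPdf d m σ x = ∏ i, gaussianPDFReal (m i) ⟨σ^2, sq_nonneg σ⟩ (x i) := by
  have h2 : (0:ℝ) < 2 * π * σ^2 := by positivity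
  have hnorm : ‖x - m‖^2 = ∑ i, (x i - m i)^2 := by
    rw [EuclideanSpace.norm_eq, Real.sq_sqrt (by positivity)]
    exact Finset.sum_congr rfl fun i _ => by rw [Real.norm_eq_abs, sq_abs]; rfl
  have hvcoe : ((⟨σ^2, sq_nonneg σ⟩ : ℝ≥0) : ℝ) = σ^2 := rfl
  unfold gaussPdf gaussianPDFReal
  simp only [NNReal.coe_mk, hvcoe]
  rw [hnorm, Finset.prod_mul_distrib, Finset.prod_const]
  have hc : (Real.sqrt (2 * π * σ^2))⁻¹ ^ ((Finset.univ : Finset (Fin d)).card)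
      = (2 * π * σ^2) ^ (-(d:ℝ)/2) := by
    rw [Finset.card_univ, Fintype.card_fin, Real.sqrt_eq_rpow, ← Real.rpow_neg h2.le,
      ← Real.rpow_natCast ((2*π*σ^2) ^ (-(1/2) : ℝ)) d, ← Real.rpow_mul h2.le]
    congr 1
    ring
  erw [hc]
  congr 1
  rw [← Real.exp_sum]
  congr 1
  rw [← Finset.sum_div, ← Finset.sum_neg_distrib]
  rfl

lemma gaussPdf_comp_pi (d : ℕ) (m : EuclideanSpace ℝ (Fin d)) {σ : ℝ} (hσ : 0 < σ)
    (z : (Fin d) → ℝ) :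
    gaussPdf d m σ ((MeasurableEquiv.toLp 2 ((Fin d) → ℝ)) z)
      = ∏ i, gaussianPDFReal (m i) ⟨σ^2, sq_nonneg σ⟩ (z i) := by
  rw [gaussPdf_pi d m hσ]
  rfl

lemma integrable_gaussPdf (d : ℕ) (m : EuclideanSpace ℝ (Fin d)) {σ : ℝ} (hσ : 0 < σ) :
    Integrable (gaussPdf d m σ) := by
  have hmp : MeasurePreserving (MeasurableEquiv.toLp 2 ((Fin d) → ℝ)) :=
    (EuclideanSpace.volume_preserving_symm_measurableEquiv_toLp (Fin d)).symm
  rw [← hmp.integrable_comp_emb (MeasurableEquiv.measurableEmbedding _)]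
  have : (gaussPdf d m σ) ∘ ((MeasurableEquiv.toLp 2 ((Fin d) → ℝ)))
      = fun z : (Fin d) → ℝ => ∏ i, gaussianPDFReal (m i) ⟨σ^2, sq_nonneg σ⟩ (z i) :=
    funext fun z => gaussPdf_comp_pi d m hσ z
  rw [this]
  exact Integrable.fintype_prod fun i => integrable_gaussianPDFReal _ _

lemma integral_gaussPdf_coord_Iic (d : ℕ) (m : EuclideanSpace ℝ (Fin d)) (j : Fin d) (c : ℝ)
    {σ : ℝ} (hσ : 0 < σ) :
    ∫ y, Set.indicator {y : EuclideanSpace ℝ (Fin d) | y j ≤ c} (gaussPdf d m σ) y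
      = stdNormCDF ((c - m j)/σ) := by
  have hmp : MeasurePreserving (MeasurableEquiv.toLp 2 ((Fin d) → ℝ)) :=
    (EuclideanSpace.volume_preserving_symm_measurableEquiv_toLp (Fin d)).symm
  rw [← hmp.integral_comp (MeasurableEquiv.measurableEmbedding _)]
  set v : ℝ≥0 := ⟨σ^2, sq_nonneg σ⟩ with hv
  have hpt : ∀ z : (Fin d) → ℝ,
      Set.indicator {y : EuclideanSpace ℝ (Fin d) | y j ≤ c} (gaussPdf d m σ)
        ((MeasurableEquiv.toLp 2 ((Fin d) → ℝ)) z)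
      = ∏ i, (if i = j then (Iic c).indicator (gaussianPDFReal (m i) v) (z i)
          else gaussianPDFReal (m i) v (z i)) := by
    intro z
    have hmem : ((MeasurableEquiv.toLp 2 ((Fin d) → ℝ)) z)
        ∈ {y : EuclideanSpace ℝ (Fin d) | y j ≤ c} ↔ z j ≤ c := Iff.rfl
    by_cases hzj : z j ≤ c
    · rw [Set.indicator_of_mem (hmem.mpr hzj), gaussPdf_comp_pi d m hσ]
      exact Finset.prod_congr rfl fun i _ => by
        by_cases hij : i = j
        · subst hij; simp [Set.indicator_of_mem, hzj]; rfl
        · simp [hij]; rfl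
    · rw [Set.indicator_of_notMem (fun h => hzj (hmem.mp h))]
      refine (Finset.prod_eq_zero (Finset.mem_univ j) ?_).symm
      simp [Set.indicator_of_notMem, hzj]
  rw [integral_congr_ae (Filter.Eventually.of_forall hpt), volume_pi,
    integral_fintype_prod_eq_prod (ι := Fin d)
      (f := fun i x => if i = j then (Iic c).indicator (gaussianPDFReal (m i) v) x
        else gaussianPDFReal (m i) v x)]
  have : ∀ i, (∫ x, if i = j then (Iic c).indicator (gaussianPDFReal (m i) v) x
      else gaussianPDFReal (m i) v x)
      = if i = j then stdNormCDF ((c - m j)/σ) else 1 := by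
    intro i
    by_cases hij : i = j
    · subst hij
      simp only [eq_self_iff_true, if_true]
      rw [MeasureTheory.integral_indicator measurableSet_Iic, int_g1_Iic _ _ hσ]
    · simp only [if_neg hij]
      exact integral_gaussianPDFReal_eq_one _ (vσ_ne hσ)
  simp_rw [this]
  simp

lemma integral_gaussPdf_coord_Iio (d : ℕ) (m : EuclideanSpace ℝ (Fin d)) (j : Fin d) (c : ℝ)
    {σ : ℝ} (hσ : 0 < σ) :
    ∫ y, Set.indicator {y : EuclideanSpace ℝ (Fin d) | y j < c} (gaussPdf d m σ) y
      = stdNormCDF ((c - m j)/σ) := by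
  have hmp : MeasurePreserving (MeasurableEquiv.toLp 2 ((Fin d) → ℝ)) :=
    (EuclideanSpace.volume_preserving_symm_measurableEquiv_toLp (Fin d)).symm
  rw [← hmp.integral_comp (MeasurableEquiv.measurableEmbedding _)]
  set v : ℝ≥0 := ⟨σ^2, sq_nonneg σ⟩ with hv
  have hpt : ∀ z : (Fin d) → ℝ,
      Set.indicator {y : EuclideanSpace ℝ (Fin d) | y j < c} (gaussPdf d m σ)
        ((MeasurableEquiv.toLp 2 ((Fin d) → ℝ)) z)
      = ∏ i, (if i = j then (Iio c).indicator (gaussianPDFReal (m i) v) (z i)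
          else gaussianPDFReal (m i) v (z i)) := by
    intro z
    have hmem : ((MeasurableEquiv.toLp 2 ((Fin d) → ℝ)) z)
        ∈ {y : EuclideanSpace ℝ (Fin d) | y j < c} ↔ z j < c := Iff.rfl
    by_cases hzj : z j < c
    · rw [Set.indicator_of_mem (hmem.mpr hzj), gaussPdf_comp_pi d m hσ]
      exact Finset.prod_congr rfl fun i _ => by
        by_cases hij : i = j
        · subst hij; simp [Set.indicator_of_mem, hzj]; rfl
        · simp [hij]; rfl
    · rw [Set.indicator_of_notMem (fun h => hzj (hmem.mp h))]
      refine (Finset.prod_eq_zero (Finset.mem_univ j) ?_).symm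
      simp [Set.indicator_of_notMem, hzj]
  rw [integral_congr_ae (Filter.Eventually.of_forall hpt), volume_pi,
    integral_fintype_prod_eq_prod (ι := Fin d)
      (f := fun i x => if i = j then (Iio c).indicator (gaussianPDFReal (m i) v) x
        else gaussianPDFReal (m i) v x)]
  have : ∀ i, (∫ x, if i = j then (Iio c).indicator (gaussianPDFReal (m i) v) x
      else gaussianPDFReal (m i) v x)
      = if i = j then stdNormCDF ((c - m j)/σ) else 1 := by
    intro i
    by_cases hij : i = j
    · subst hij
      simp only [eq_self_iff_true, if_true]
      rw [MeasureTheory.integral_indicator measurableSet_Iio, int_g1_Iio _ _ hσ]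
    · simp only [if_neg hij]
      exact integral_gaussianPDFReal_eq_one _ (vσ_ne hσ)
  simp_rw [this]
  simp

/-- The `d`-dimensional Gaussian measure `N(m, σ²I)` on `ℝ^d`. -/
noncomputable def gauss (d : ℕ) (m : EuclideanSpace ℝ (Fin d)) (σ : ℝ) :
    Measure (EuclideanSpace ℝ (Fin d)) :=
  volume.withDensity fun x => ENNReal.ofReal (gaussPdf d m σ x)

section Halfspace

variable {d : ℕ}

lemma exists_onb (hd : 1 ≤ d) {μw : EuclideanSpace ℝ (Fin d)} (hw : μw ≠ 0) :
    ∃ b : OrthonormalBasis (Fin d) ℝ (EuclideanSpace ℝ (Fin d)),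
      b ⟨0, hd⟩ = ‖μw‖⁻¹ • μw := by
  set j : Fin d := ⟨0, hd⟩
  set e : EuclideanSpace ℝ (Fin d) := ‖μw‖⁻¹ • μw with he
  have hune : ‖e‖ = 1 := norm_smul_inv_norm hw
  have horth : Orthonormal ℝ (Set.restrict {j} (fun _ : Fin d => e)) := by
    constructor
    · intro i; exact hune
    · intro i k hik
      exact absurd (Subtype.ext ((Set.mem_singleton_iff.mp i.2).trans
        (Set.mem_singleton_iff.mp k.2).symm)) hik
  obtain ⟨b, hb⟩ := horth.exists_orthonormalBasis_extension_of_card_eq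
    (by simp [finrank_euclideanSpace_fin])
  exact ⟨b, hb j rfl⟩

lemma integral_gaussPdf_halfspace_le (hd : 1 ≤ d) (m : EuclideanSpace ℝ (Fin d))
    {μw : EuclideanSpace ℝ (Fin d)} (hw : μw ≠ 0) {σ : ℝ} (hσ : 0 < σ) (θ : ℝ) :
    ∫ x in {x : EuclideanSpace ℝ (Fin d) | ⟪x, μw⟫ ≤ θ}, gaussPdf d m σ x
      = stdNormCDF ((θ - ⟪m, μw⟫)/(σ * ‖μw‖)) := by
  have hn : (0:ℝ) < ‖μw‖ := norm_pos_iff.mpr hw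
  obtain ⟨b, hb⟩ := exists_onb hd hw
  set j : Fin d := ⟨0, hd⟩
  have hS : MeasurableSet {x : EuclideanSpace ℝ (Fin d) | ⟪x, μw⟫ ≤ θ} :=
    measurableSet_le ((continuous_id.inner continuous_const).measurable) measurable_const
  rw [← MeasureTheory.integral_indicator hS]
  rw [← (b.measurePreserving_repr_symm).integral_comp
    (b.repr.symm.toHomeomorph.measurableEmbedding) _]
  have hinner : ∀ y : EuclideanSpace ℝ (Fin d), ⟪b.repr.symm y, μw⟫ = ‖μw‖ * y j := by
    intro y
    have hmu : μw = ‖μw‖ • (‖μw‖⁻¹ • μw) := by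
      rw [smul_smul, mul_inv_cancel₀ hn.ne', one_smul]
    calc ⟪b.repr.symm y, μw⟫ = ⟪b.repr.symm y, ‖μw‖ • (‖μw‖⁻¹ • μw)⟫ := by rw [← hmu]
      _ = ‖μw‖ * ⟪b.repr.symm y, b j⟫ := by rw [real_inner_smul_right, hb]
      _ = ‖μw‖ * ⟪b j, b.repr.symm y⟫ := by rw [real_inner_comm]
      _ = ‖μw‖ * (b.repr (b.repr.symm y) j) := by rw [b.repr_apply_apply]
      _ = ‖μw‖ * y j := by rw [LinearIsometryEquiv.apply_symm_apply]
  have hpdf : ∀ y : EuclideanSpace ℝ (Fin d),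
      gaussPdf d m σ (b.repr.symm y) = gaussPdf d (b.repr m) σ y := by
    intro y
    unfold gaussPdf
    congr 2
    rw [← b.repr.norm_map (b.repr.symm y - m), map_sub, LinearIsometryEquiv.apply_symm_apply]
  have hpt : ∀ y : EuclideanSpace ℝ (Fin d),
      Set.indicator {x : EuclideanSpace ℝ (Fin d) | ⟪x, μw⟫ ≤ θ} (gaussPdf d m σ)
        (b.repr.symm y)
      = Set.indicator {y : EuclideanSpace ℝ (Fin d) | y j ≤ θ/‖μw‖}
          (gaussPdf d (b.repr m) σ) y := by
    intro y
    have hmem : b.repr.symm y ∈ {x : EuclideanSpace ℝ (Fin d) | ⟪x, μw⟫ ≤ θ}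
        ↔ y j ≤ θ/‖μw‖ := by
      simp only [Set.mem_setOf_eq, hinner y]
      rw [le_div_iff₀ hn]
      constructor <;> intro h <;> nlinarith [mul_comm (‖μw‖) (y j)]
    by_cases hy : y j ≤ θ/‖μw‖
    · rw [Set.indicator_of_mem (hmem.mpr hy),
        Set.indicator_of_mem (show y ∈ {y : EuclideanSpace ℝ (Fin d) | y j ≤ θ/‖μw‖} from hy),
        hpdf]
    · rw [Set.indicator_of_notMem (fun h => hy (hmem.mp h)),
        Set.indicator_of_notMem
          (show y ∉ {y : EuclideanSpace ℝ (Fin d) | y j ≤ θ/‖μw‖} from hy)]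
  rw [integral_congr_ae (Filter.Eventually.of_forall hpt),
    integral_gaussPdf_coord_Iic d (b.repr m) j (θ/‖μw‖) hσ]
  have hbm : (b.repr m) j = ⟪m, μw⟫ / ‖μw‖ := by
    rw [b.repr_apply_apply, hb, real_inner_smul_left, real_inner_comm]
    field_simp
  rw [hbm, div_sub_div_same, div_div, mul_comm (‖μw‖) σ]

lemma integral_gaussPdf_halfspace_lt (hd : 1 ≤ d) (m : EuclideanSpace ℝ (Fin d))
    {μw : EuclideanSpace ℝ (Fin d)} (hw : μw ≠ 0) {σ : ℝ} (hσ : 0 < σ) (θ : ℝ) :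
    ∫ x in {x : EuclideanSpace ℝ (Fin d) | ⟪x, μw⟫ < θ}, gaussPdf d m σ x
      = stdNormCDF ((θ - ⟪m, μw⟫)/(σ * ‖μw‖)) := by
  have hn : (0:ℝ) < ‖μw‖ := norm_pos_iff.mpr hw
  obtain ⟨b, hb⟩ := exists_onb hd hw
  set j : Fin d := ⟨0, hd⟩
  have hS : MeasurableSet {x : EuclideanSpace ℝ (Fin d) | ⟪x, μw⟫ < θ} :=
    measurableSet_lt ((continuous_id.inner continuous_const).measurable) measurable_const
  rw [← MeasureTheory.integral_indicator hS]
  rw [← (b.measurePreserving_repr_symm).integral_comp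
    (b.repr.symm.toHomeomorph.measurableEmbedding) _]
  have hinner : ∀ y : EuclideanSpace ℝ (Fin d), ⟪b.repr.symm y, μw⟫ = ‖μw‖ * y j := by
    intro y
    have hmu : μw = ‖μw‖ • (‖μw‖⁻¹ • μw) := by
      rw [smul_smul, mul_inv_cancel₀ hn.ne', one_smul]
    calc ⟪b.repr.symm y, μw⟫ = ⟪b.repr.symm y, ‖μw‖ • (‖μw‖⁻¹ • μw)⟫ := by rw [← hmu]
      _ = ‖μw‖ * ⟪b.repr.symm y, b j⟫ := by rw [real_inner_smul_right, hb]
      _ = ‖μw‖ * ⟪b j, b.repr.symm y⟫ := by rw [real_inner_comm]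
      _ = ‖μw‖ * (b.repr (b.repr.symm y) j) := by rw [b.repr_apply_apply]
      _ = ‖μw‖ * y j := by rw [LinearIsometryEquiv.apply_symm_apply]
  have hpdf : ∀ y : EuclideanSpace ℝ (Fin d),
      gaussPdf d m σ (b.repr.symm y) = gaussPdf d (b.repr m) σ y := by
    intro y
    unfold gaussPdf
    congr 2
    rw [← b.repr.norm_map (b.repr.symm y - m), map_sub, LinearIsometryEquiv.apply_symm_apply]
  have hpt : ∀ y : EuclideanSpace ℝ (Fin d),
      Set.indicator {x : EuclideanSpace ℝ (Fin d) | ⟪x, μw⟫ < θ} (gaussPdf d m σ)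
        (b.repr.symm y)
      = Set.indicator {y : EuclideanSpace ℝ (Fin d) | y j < θ/‖μw‖}
          (gaussPdf d (b.repr m) σ) y := by
    intro y
    have hmem : b.repr.symm y ∈ {x : EuclideanSpace ℝ (Fin d) | ⟪x, μw⟫ < θ}
        ↔ y j < θ/‖μw‖ := by
      simp only [Set.mem_setOf_eq, hinner y]
      rw [lt_div_iff₀ hn]
      constructor <;> intro h <;> nlinarith [mul_comm (‖μw‖) (y j)]
    by_cases hy : y j < θ/‖μw‖
    · rw [Set.indicator_of_mem (hmem.mpr hy),
        Set.indicator_of_mem (show y ∈ {y : EuclideanSpace ℝ (Fin d) | y j < θ/‖μw‖} from hy),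
        hpdf]
    · rw [Set.indicator_of_notMem (fun h => hy (hmem.mp h)),
        Set.indicator_of_notMem
          (show y ∉ {y : EuclideanSpace ℝ (Fin d) | y j < θ/‖μw‖} from hy)]
  rw [integral_congr_ae (Filter.Eventually.of_forall hpt),
    integral_gaussPdf_coord_Iio d (b.repr m) j (θ/‖μw‖) hσ]
  have hbm : (b.repr m) j = ⟪m, μw⟫ / ‖μw‖ := by
    rw [b.repr_apply_apply, hb, real_inner_smul_left, real_inner_comm]
    field_simp
  rw [hbm, div_sub_div_same, div_div, mul_comm (‖μw‖) σ]

lemma gauss_halfspace_le (hd : 1 ≤ d) (m : EuclideanSpace ℝ (Fin d))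
    {μw : EuclideanSpace ℝ (Fin d)} (hw : μw ≠ 0) {σ : ℝ} (hσ : 0 < σ) (θ : ℝ) :
    gauss d m σ {x : EuclideanSpace ℝ (Fin d) | ⟪x, μw⟫ ≤ θ}
      = ENNReal.ofReal (stdNormCDF ((θ - ⟪m, μw⟫)/(σ * ‖μw‖))) := by
  have hS : MeasurableSet {x : EuclideanSpace ℝ (Fin d) | ⟪x, μw⟫ ≤ θ} :=
    measurableSet_le ((continuous_id.inner continuous_const).measurable) measurable_const
  rw [gauss, withDensity_apply _ hS,
    ← ofReal_integral_eq_lintegral_ofReal ((integrable_gaussPdf d m hσ).integrableOn)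
      (Filter.Eventually.of_forall fun x => gaussPdf_nonneg d m hσ x),
    integral_gaussPdf_halfspace_le hd m hw hσ θ]

lemma gauss_halfspace_lt (hd : 1 ≤ d) (m : EuclideanSpace ℝ (Fin d))
    {μw : EuclideanSpace ℝ (Fin d)} (hw : μw ≠ 0) {σ : ℝ} (hσ : 0 < σ) (θ : ℝ) :
    gauss d m σ {x : EuclideanSpace ℝ (Fin d) | ⟪x, μw⟫ < θ}
      = ENNReal.ofReal (stdNormCDF ((θ - ⟪m, μw⟫)/(σ * ‖μw‖))) := by
  have hS : MeasurableSet {x : EuclideanSpace ℝ (Fin d) | ⟪x, μw⟫ < θ} :=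
    measurableSet_lt ((continuous_id.inner continuous_const).measurable) measurable_const
  rw [gauss, withDensity_apply _ hS,
    ← ofReal_integral_eq_lintegral_ofReal ((integrable_gaussPdf d m hσ).integrableOn)
      (Filter.Eventually.of_forall fun x => gaussPdf_nonneg d m hσ x),
    integral_gaussPdf_halfspace_lt hd m hw hσ θ]

end Halfspace

/-- The data-generating distribution `D` on `ℝ^d × {−1,+1}` (labels embedded in `ℝ`):
`Y` is uniform on `{−1,+1}`, `X | Y=+1 ∼ N(μ, σ²I)`, and
`X | Y=−1 ∼ p·N(−μ, σ²I) + (1−p)·N(3μ, σ²I)`. -/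
noncomputable def Dmix (d : ℕ) (μv : EuclideanSpace ℝ (Fin d)) (σ p : ℝ) :
    Measure (EuclideanSpace ℝ (Fin d) × ℝ) :=
  ENNReal.ofReal (1 / 2) • (gauss d μv σ).map (fun x => (x, (1 : ℝ)))
    + ENNReal.ofReal (p / 2) • (gauss d (-μv) σ).map (fun x => (x, (-1 : ℝ)))
    + ENNReal.ofReal ((1 - p) / 2) • (gauss d ((3 : ℝ) • μv) σ).map (fun x => (x, (-1 : ℝ)))
/-- The LDA classifier with centers `μ` and `μ₋ = −(4p−3)μ`: outputs `+1`
iff `‖x − μ‖ ≤ ‖x − μ₋‖`. -/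
noncomputable def hLDA (d : ℕ) (μv : EuclideanSpace ℝ (Fin d)) (p : ℝ)
    (x : EuclideanSpace ℝ (Fin d)) : ℝ :=
  if ‖x - μv‖ ≤ ‖x - (-(4 * p - 3)) • μv‖ then 1 else -1

/-- Error of the ideal LDA classifier built with mixture weight `q = 1 − 1/t`
but evaluated on the distribution `D_p` (training on the shortened-tail
distribution, testing on the original one). -/
theorem lda_error_train_q_test_p (d : ℕ) (hd : 1 ≤ d)
    (μv : EuclideanSpace ℝ (Fin d)) (hμ : μv ≠ 0) (σ p t q : ℝ) (hσ : 0 < σ)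
    (hp1 : 1 / 2 < p) (hp2 : p < 1) (ht : 2 < t) (hq : q = 1 - 1 / t) :
    2 * ((Dmix d μv σ p) {z | hLDA d μv q z.1 ≠ z.2}).toReal =
      stdNormCDF (-(1 - 2 / t) * (‖μv‖ / σ))
        + p * stdNormCDF (-(1 + 2 / t) * (‖μv‖ / σ))
        + (1 - p) * stdNormCDF ((3 - 2 / t) * (‖μv‖ / σ)) := by
  have ht0 : (0:ℝ) < t := by linarith
  have hσne : σ ≠ 0 := hσ.ne'
  have hn : (0:ℝ) < ‖μv‖ := norm_pos_iff.mpr hμ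
  set τ : ℝ := 2/t * ‖μv‖^2 with hτ
  -- the decision rule as a halfspace
  have hcond : ∀ x : EuclideanSpace ℝ (Fin d),
      (‖x - μv‖ ≤ ‖x - (-(4 * q - 3)) • μv‖) ↔ (τ ≤ ⟪x, μv⟫) := by
    intro x
    have hc : (-(4 * q - 3) : ℝ) = 4 * (1/t) - 1 := by rw [hq]; ring
    have h1 : (‖x - μv‖ ≤ ‖x - (-(4 * q - 3)) • μv‖) ↔
        ‖x - μv‖^2 ≤ ‖x - (-(4 * q - 3)) • μv‖^2 := by
      constructor
      · intro h; exact pow_le_pow_left₀ (norm_nonneg _) h 2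
      · intro h; exact le_of_pow_le_pow_left₀ two_ne_zero (norm_nonneg _) h
    rw [h1, norm_sub_sq_real, norm_sub_sq_real, real_inner_smul_right, norm_smul, hc]
    set u : ℝ := 1/t with hu
    have hu1 : (0:ℝ) < u := by positivity
    have hu2 : u < 1/2 := by rw [hu, div_lt_div_iff₀ ht0 two_pos]; linarith
    have h48 : (0:ℝ) < 4 - 8*u := by linarith
    have hτu : τ = 2*u*‖μv‖^2 := by rw [hτ, hu]; ring
    have hN : (0:ℝ) < ‖μv‖^2 := by positivity
    rw [hτu]
    simp only [Real.norm_eq_abs, mul_pow, sq_abs]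
    constructor <;> intro h <;> nlinarith [h48, hN, h]
  set S : Set (EuclideanSpace ℝ (Fin d) × ℝ) := {z | hLDA d μv q z.1 ≠ z.2} with hSdef
  have hcondMeas : MeasurableSet
      {x : EuclideanSpace ℝ (Fin d) | ‖x - μv‖ ≤ ‖x - (-(4*q-3)) • μv‖} :=
    measurableSet_le ((continuous_id.sub continuous_const).norm.measurable)
      ((continuous_id.sub continuous_const).norm.measurable)
  have hLDAmeas : Measurable (hLDA d μv q) :=
    Measurable.ite hcondMeas measurable_const measurable_const
  have hSmeas : MeasurableSet S := by
    have hS' : S = {z : EuclideanSpace ℝ (Fin d) × ℝ | hLDA d μv q z.1 = z.2}ᶜ := by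
      ext z; simp [hSdef]
    rw [hS']
    exact (measurableSet_eq_fun (hLDAmeas.comp measurable_fst) measurable_snd).compl
  have hmap1 : Measurable (fun x : EuclideanSpace ℝ (Fin d) => (x, (1:ℝ))) :=
    measurable_id.prodMk measurable_const
  have hmapm1 : Measurable (fun x : EuclideanSpace ℝ (Fin d) => (x, (-1:ℝ))) :=
    measurable_id.prodMk measurable_const
  have hA : (fun x : EuclideanSpace ℝ (Fin d) => (x, (1:ℝ))) ⁻¹' S
      = {x : EuclideanSpace ℝ (Fin d) | ⟪x, μv⟫ < τ} := by
    ext x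
    simp only [Set.mem_preimage, hSdef, Set.mem_setOf_eq]
    have : hLDA d μv q x ≠ 1 ↔ ¬ (‖x - μv‖ ≤ ‖x - (-(4*q-3)) • μv‖) := by
      unfold hLDA
      split_ifs with hx
      · exact iff_of_false (by norm_num) (not_not_intro hx)
      · exact iff_of_true (by norm_num) hx
    rw [this, hcond x, not_le]
  have hB : (fun x : EuclideanSpace ℝ (Fin d) => (x, (-1:ℝ))) ⁻¹' S
      = {x : EuclideanSpace ℝ (Fin d) | ⟪x, -μv⟫ ≤ -τ} := by
    ext x
    simp only [Set.mem_preimage, hSdef, Set.mem_setOf_eq]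
    have h2 : hLDA d μv q x ≠ -1 ↔ (‖x - μv‖ ≤ ‖x - (-(4*q-3)) • μv‖) := by
      unfold hLDA
      split_ifs with hx
      · exact iff_of_true (by norm_num) hx
      · exact iff_of_false (by norm_num) hx
    rw [h2, hcond x, inner_neg_right, neg_le_neg_iff]
  have hDS : Dmix d μv σ p S
      = ENNReal.ofReal (1/2) * gauss d μv σ {x : EuclideanSpace ℝ (Fin d) | ⟪x, μv⟫ < τ}
      + ENNReal.ofReal (p/2) * gauss d (-μv) σ {x : EuclideanSpace ℝ (Fin d) | ⟪x, -μv⟫ ≤ -τ}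
      + ENNReal.ofReal ((1-p)/2)
          * gauss d ((3:ℝ) • μv) σ {x : EuclideanSpace ℝ (Fin d) | ⟪x, -μv⟫ ≤ -τ} := by
    rw [Dmix, Measure.add_apply, Measure.add_apply, Measure.smul_apply, Measure.smul_apply,
      Measure.smul_apply, Measure.map_apply hmap1 hSmeas, Measure.map_apply hmapm1 hSmeas,
      Measure.map_apply hmapm1 hSmeas, hA, hB]
    rfl
  have h1 := gauss_halfspace_lt hd μv hμ hσ τ
  have h2 := gauss_halfspace_le hd (-μv) (μw := -μv) (neg_ne_zero.mpr hμ) hσ (-τ)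
  have h3 := gauss_halfspace_le hd ((3:ℝ) • μv) (μw := -μv) (neg_ne_zero.mpr hμ) hσ (-τ)
  rw [real_inner_self_eq_norm_sq] at h1
  rw [inner_neg_neg, real_inner_self_eq_norm_sq, norm_neg] at h2
  rw [inner_neg_right, real_inner_smul_left, real_inner_self_eq_norm_sq, norm_neg] at h3
  have a1 : (τ - ‖μv‖^2)/(σ * ‖μv‖) = -(1 - 2/t) * (‖μv‖/σ) := by
    rw [hτ]; field_simp; ring
  have a2 : (-τ - ‖μv‖^2)/(σ * ‖μv‖) = -(1 + 2/t) * (‖μv‖/σ) := by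
    rw [hτ]; field_simp; ring
  have a3 : (-τ - -(3 * ‖μv‖^2))/(σ * ‖μv‖) = (3 - 2/t) * (‖μv‖/σ) := by
    rw [hτ]; field_simp; ring
  rw [a1] at h1
  rw [a2] at h2
  rw [a3] at h3
  rw [hDS, h1, h2, h3]
  have hΦ1 := stdNormCDF_nonneg (-(1 - 2/t) * (‖μv‖/σ))
  have hΦ2 := stdNormCDF_nonneg (-(1 + 2/t) * (‖μv‖/σ))
  have hΦ3 := stdNormCDF_nonneg ((3 - 2/t) * (‖μv‖/σ))
  have hp0 : (0:ℝ) ≤ p/2 := by linarith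
  have hp0' : (0:ℝ) ≤ (1-p)/2 := by linarith
  rw [← ENNReal.ofReal_mul (by norm_num : (0:ℝ) ≤ 1/2), ← ENNReal.ofReal_mul hp0,
    ← ENNReal.ofReal_mul hp0',
    ← ENNReal.ofReal_add (by positivity) (mul_nonneg hp0 hΦ2),
    ← ENNReal.ofReal_add (by positivity) (mul_nonneg hp0' hΦ3),
    ENNReal.toReal_ofReal (by positivity)]
  ring
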